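/- Let (X, Z) be a random pair in ℝ^d × ℝ with P(X = 0) = 0, where ℝ^d and ℝ^{d+1} carry norms ‖·‖ such that the canonical basis vectors have norm one and ‖(x, 0)‖ = ‖x‖ for all x ∈ ℝ^d. Suppose the conditional law of t⁻¹(X, Z) given ‖X‖ > t converges weakly, as t → ∞, to a probability distribution P̃_∞ supported on {(x, z) : ‖x‖ > 1}, and that |Z| ≤ M ‖X‖ almost surely for some M > 0. Then P̃_∞ is supported on the truncated cone {(x, z) : ‖x‖ > 1, |z| ≤ M‖x‖}, and the conditional law of t⁻¹(X, Z) given ‖(X, Z)‖ > t converges weakly, as t → ∞, to a probability distribution Π_∞ supported on the truncated cone {(x, z) : ‖(x, z)‖ > 1, |z| ≤ M‖x‖}. -/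

import Mathlib

open MeasureTheory ProbabilityTheory Filter Set
open scoped ENNReal Topology

/-- Weak convergence, as `t → ∞`, of a family of (finite) measures to a limit measure,
tested against bounded continuous functions. -/
def TendstoWeakly {E : Type*} [MeasurableSpace E] [TopologicalSpace E]
    (μ : ℝ → Measure E) (ν : Measure E) : Prop :=
  ∀ f : BoundedContinuousFunction E ℝ,
    Filter.Tendsto (fun t => ∫ x, f x ∂(μ t)) Filter.atTop (𝓝 (∫ x, f x ∂ν))

/-- `N` is a norm function on the real vector space `E`. -/
def IsNormFun {E : Type*} [AddCommGroup E] [Module ℝ E] (N : E → ℝ) : Prop :=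
  (∀ x y, N (x + y) ≤ N x + N y) ∧ (∀ (c : ℝ) x, N (c • x) = |c| * N x) ∧
    (∀ x, x ≠ 0 → 0 < N x)

set_option linter.unusedSectionVars false

section Helpers

variable {E : Type*} [MeasurableSpace E] [MetricSpace E] [BorelSpace E]

/-- continuous approximation from above of the indicator of a closed set -/
noncomputable def psiF (F : Set E) (n : ℕ) : BoundedContinuousFunction E ℝ :=
  BoundedContinuousFunction.mkOfBound
    ⟨fun x => max 0 (1 - n * Metric.infDist x F),
      continuous_const.max (continuous_const.sub
        (continuous_const.mul (Metric.continuous_infDist_pt F)))⟩ 1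
    (by
      intro x y
      rw [Real.dist_eq, abs_sub_le_iff]
      have h0 : ∀ z : E, (0:ℝ) ≤ max 0 (1 - n * Metric.infDist z F) := fun z => le_max_left _ _
      have h1 : ∀ z : E, max 0 (1 - n * Metric.infDist z F) ≤ 1 := by
        intro z
        apply max_le (by norm_num)
        have : (0:ℝ) ≤ (n:ℝ) * Metric.infDist z F :=
          mul_nonneg (Nat.cast_nonneg n) Metric.infDist_nonneg
        linarith
      constructor <;> (simp only [ContinuousMap.coe_mk]; linarith [h0 x, h0 y, h1 x, h1 y]))

lemma psiF_apply (F : Set E) (n : ℕ) (x : E) :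
    psiF F n x = max 0 (1 - n * Metric.infDist x F) := rfl

lemma psiF_nonneg (F : Set E) (n : ℕ) (x : E) : 0 ≤ psiF F n x := le_max_left _ _

lemma psiF_le_one (F : Set E) (n : ℕ) (x : E) : psiF F n x ≤ 1 := by
  rw [psiF_apply]
  apply max_le (by norm_num)
  have : (0:ℝ) ≤ (n:ℝ) * Metric.infDist x F :=
    mul_nonneg (Nat.cast_nonneg n) Metric.infDist_nonneg
  linarith

lemma indicator_le_psiF (F : Set E) (n : ℕ) (x : E) :
    F.indicator (fun _ => (1:ℝ)) x ≤ psiF F n x := by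
  by_cases hx : x ∈ F
  · rw [Set.indicator_of_mem hx, psiF_apply, Metric.infDist_zero_of_mem hx]
    simp
  · rw [Set.indicator_of_notMem hx]
    exact psiF_nonneg F n x

lemma psiF_antitone (F : Set E) (x : E) : Antitone (fun n => psiF F n x) := by
  intro m n hmn
  simp only [psiF_apply]
  apply max_le_max le_rfl
  have : (m:ℝ) * Metric.infDist x F ≤ (n:ℝ) * Metric.infDist x F :=
    mul_le_mul_of_nonneg_right (Nat.cast_le.mpr hmn) Metric.infDist_nonneg
  linarith

lemma psiF_tendsto (F : Set E) (hF : IsClosed F) (hFne : F.Nonempty) (x : E) :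
    Tendsto (fun n => psiF F n x) atTop (𝓝 (F.indicator (fun _ => (1:ℝ)) x)) := by
  by_cases hx : x ∈ F
  · rw [Set.indicator_of_mem hx]
    simp only [psiF_apply, Metric.infDist_zero_of_mem hx]
    simp
  · rw [Set.indicator_of_notMem hx]
    have hpos : 0 < Metric.infDist x F := (hF.notMem_iff_infDist_pos hFne).mp hx
    have : ∀ᶠ n : ℕ in atTop, psiF F n x = 0 := by
      have htop : Tendsto (fun n : ℕ => (n:ℝ) * Metric.infDist x F) atTop atTop :=
        Tendsto.atTop_mul_const hpos tendsto_natCast_atTop_atTop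
      filter_upwards [htop.eventually_ge_atTop 1] with n hn
      rw [psiF_apply, max_eq_left (by linarith)]
    exact Tendsto.congr' (by filter_upwards [this] with n hn using hn.symm) tendsto_const_nhds

lemma indicator_closure_ae_eq {ν : Measure E} {G : Set E}
    (hfront : ν (closure G \ G) = 0) (f : E → ℝ) :
    (closure G).indicator f =ᵐ[ν] G.indicator f := by
  have h : ∀ᵐ x ∂ν, x ∉ closure G \ G := by
    rw [ae_iff]; simp only [not_not]; exact hfront
  filter_upwards [h] with x hx
  by_cases hxG : x ∈ G
  · rw [Set.indicator_of_mem hxG, Set.indicator_of_mem (subset_closure hxG)]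
  · by_cases hxc : x ∈ closure G
    · exact absurd ⟨hxc, hxG⟩ hx
    · rw [Set.indicator_of_notMem hxG, Set.indicator_of_notMem hxc]

lemma tendstoWeakly_integral_indicator
    {μ : ℝ → Measure E} {ν : Measure E} [IsFiniteMeasure ν]
    (hprob : ∀ t, IsProbabilityMeasure (μ t))
    (hconv : TendstoWeakly μ ν) {G : Set E} (hGopen : IsOpen G)
    (hfront : ν (closure G \ G) = 0) (f : BoundedContinuousFunction E ℝ)
    (hf : ∀ x, 0 ≤ f x) :
    Tendsto (fun t => ∫ x, G.indicator (⇑f) x ∂(μ t)) atTop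
      (𝓝 (∫ x, G.indicator (⇑f) x ∂ν)) := by
  rcases eq_empty_or_nonempty G with hGe | hGne
  · simpa [hGe] using tendsto_const_nhds
  by_cases hGu : G = univ
  · simpa [hGu] using hconv f
  have hGcne : Gᶜ.Nonempty := Set.nonempty_compl.2 hGu
  have hGm : MeasurableSet G := hGopen.measurableSet
  have hclne : (closure G).Nonempty := hGne.closure
  -- pointwise inequalities
  have hle1 : ∀ (n : ℕ) (x : E), ((1 - psiF Gᶜ n) * f) x ≤ G.indicator (⇑f) x := by
    intro n x
    simp only [BoundedContinuousFunction.coe_mul, BoundedContinuousFunction.coe_sub,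
      BoundedContinuousFunction.coe_one, Pi.mul_apply, Pi.sub_apply, Pi.one_apply]
    by_cases hx : x ∈ G
    · rw [Set.indicator_of_mem hx]
      have h1 : 1 - psiF Gᶜ n x ≤ 1 := by linarith [psiF_nonneg Gᶜ n x]
      nlinarith [hf x]
    · rw [Set.indicator_of_notMem hx]
      have h1 : (1:ℝ) ≤ psiF Gᶜ n x := by
        have := indicator_le_psiF Gᶜ n x
        rwa [Set.indicator_of_mem (Set.mem_compl hx)] at this
      nlinarith [hf x]
  have hle2 : ∀ (n : ℕ) (x : E), G.indicator (⇑f) x ≤ (psiF (closure G) n * f) x := by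
    intro n x
    simp only [BoundedContinuousFunction.coe_mul, Pi.mul_apply]
    by_cases hx : x ∈ G
    · rw [Set.indicator_of_mem hx]
      have h1 : (1:ℝ) ≤ psiF (closure G) n x := by
        have := indicator_le_psiF (closure G) n x
        rwa [Set.indicator_of_mem (subset_closure hx)] at this
      nlinarith [hf x]
    · rw [Set.indicator_of_notMem hx]
      exact mul_nonneg (psiF_nonneg _ n x) (hf x)
  -- integrability
  have hint : ∀ (m : Measure E) [IsFiniteMeasure m], Integrable (G.indicator (⇑f)) m := by
    intro m _
    exact (f.integrable m).indicator hGm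
  -- upper bound via limsup
  have hub : ∀ n : ℕ, Filter.limsup (fun t => ∫ x, G.indicator (⇑f) x ∂(μ t)) atTop
      ≤ ∫ x, (psiF (closure G) n * f) x ∂ν := by
    intro n
    have hev : ∀ t : ℝ, ∫ x, G.indicator (⇑f) x ∂(μ t) ≤ ∫ x, (psiF (closure G) n * f) x ∂(μ t) := by
      intro t
      haveI := hprob t
      exact integral_mono (hint (μ t)) ((psiF (closure G) n * f).integrable _) (hle2 n)
    calc Filter.limsup (fun t => ∫ x, G.indicator (⇑f) x ∂(μ t)) atTop
        ≤ Filter.limsup (fun t => ∫ x, (psiF (closure G) n * f) x ∂(μ t)) atTop := by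
          refine Filter.limsup_le_limsup (Filter.Eventually.of_forall hev) ?_ ?_
          · refine IsBoundedUnder.isCoboundedUnder_le ?_
            refine ⟨0, Filter.eventually_map.2 (Filter.Eventually.of_forall fun t => ?_)⟩
            haveI := hprob t
            exact integral_nonneg fun x => Set.indicator_nonneg (fun y _ => hf y) x
          · exact (hconv (psiF (closure G) n * f)).isBoundedUnder_le
      _ = ∫ x, (psiF (closure G) n * f) x ∂ν := (hconv (psiF (closure G) n * f)).limsup_eq
  -- lower bound via liminf
  have hlb : ∀ n : ℕ, ∫ x, ((1 - psiF Gᶜ n) * f) x ∂ν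
      ≤ Filter.liminf (fun t => ∫ x, G.indicator (⇑f) x ∂(μ t)) atTop := by
    intro n
    have hev : ∀ t : ℝ, ∫ x, ((1 - psiF Gᶜ n) * f) x ∂(μ t) ≤ ∫ x, G.indicator (⇑f) x ∂(μ t) := by
      intro t
      haveI := hprob t
      exact integral_mono (((1 - psiF Gᶜ n) * f).integrable _) (hint (μ t)) (hle1 n)
    calc ∫ x, ((1 - psiF Gᶜ n) * f) x ∂ν
        = Filter.liminf (fun t => ∫ x, ((1 - psiF Gᶜ n) * f) x ∂(μ t)) atTop :=
          (hconv ((1 - psiF Gᶜ n) * f)).liminf_eq.symm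
      _ ≤ Filter.liminf (fun t => ∫ x, G.indicator (⇑f) x ∂(μ t)) atTop := by
          refine Filter.liminf_le_liminf (Filter.Eventually.of_forall hev) ?_ ?_
          · exact (hconv ((1 - psiF Gᶜ n) * f)).isBoundedUnder_ge
          · refine IsBoundedUnder.isCoboundedUnder_ge ?_
            refine ⟨‖f‖, Filter.eventually_map.2 (Filter.Eventually.of_forall fun t => ?_)⟩
            haveI := hprob t
            calc ∫ x, G.indicator (⇑f) x ∂(μ t) ≤ ∫ x, f x ∂(μ t) := by
                  apply integral_mono (hint (μ t)) (f.integrable _)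
                  intro x
                  exact Set.indicator_le_self' (fun y _ => hf y) x
              _ ≤ ‖f‖ := by
                  have := norm_integral_le_of_norm_le_const
                    (C := ‖f‖) (μ := μ t) (f := ⇑f)
                    (Filter.Eventually.of_forall fun x => f.norm_coe_le_norm x)
                  simp only [probReal_univ, mul_one] at this
                  exact le_trans (le_abs_self _) this
  -- convergence of the approximating integrals over ν
  have hψlim : Tendsto (fun n => ∫ x, (psiF (closure G) n * f) x ∂ν) atTop
      (𝓝 (∫ x, G.indicator (⇑f) x ∂ν)) := by
    have h1 : Tendsto (fun n => ∫ x, (psiF (closure G) n * f) x ∂ν) atTop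
        (𝓝 (∫ x, (closure G).indicator (⇑f) x ∂ν)) := by
      apply integral_tendsto_of_tendsto_of_antitone
        (fun n => (psiF (closure G) n * f).integrable ν)
        ((f.integrable ν).indicator isClosed_closure.measurableSet)
      · exact Filter.Eventually.of_forall fun x m n hmn =>
          mul_le_mul_of_nonneg_right (psiF_antitone (closure G) x hmn) (hf x)
      · refine Filter.Eventually.of_forall fun x => ?_
        have := (psiF_tendsto (closure G) isClosed_closure hclne x).mul_const (f x)
        convert this using 2
        all_goals by_cases hx : x ∈ closure G <;>
          simp [Set.indicator_of_mem, Set.indicator_of_notMem, hx]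
    rwa [integral_congr_ae (indicator_closure_ae_eq hfront ⇑f)] at h1
  have hφlim : Tendsto (fun n => ∫ x, ((1 - psiF Gᶜ n) * f) x ∂ν) atTop
      (𝓝 (∫ x, G.indicator (⇑f) x ∂ν)) := by
    apply integral_tendsto_of_tendsto_of_monotone
      (fun n => ((1 - psiF Gᶜ n) * f).integrable ν) (hint ν)
    · refine Filter.Eventually.of_forall fun x m n hmn => ?_
      simp only [BoundedContinuousFunction.coe_mul, BoundedContinuousFunction.coe_sub,
        BoundedContinuousFunction.coe_one, Pi.mul_apply, Pi.sub_apply, Pi.one_apply]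
      have := psiF_antitone Gᶜ x hmn
      nlinarith [hf x]
    · refine Filter.Eventually.of_forall fun x => ?_
      simp only [BoundedContinuousFunction.coe_mul, BoundedContinuousFunction.coe_sub,
        BoundedContinuousFunction.coe_one, Pi.mul_apply, Pi.sub_apply, Pi.one_apply]
      have h0 : Tendsto (fun n => (1 - psiF Gᶜ n x) * f x) atTop
          (𝓝 ((1 - Gᶜ.indicator (fun _ => (1:ℝ)) x) * f x)) :=
        ((tendsto_const_nhds.sub (psiF_tendsto Gᶜ hGopen.isClosed_compl hGcne x)).mul_const (f x))
      convert h0 using 2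
      by_cases hx : x ∈ G
      · simp [Set.indicator_of_mem hx, Set.indicator_of_notMem (by simpa using hx : x ∉ Gᶜ)]
      · simp [Set.indicator_of_notMem hx, Set.indicator_of_mem (by simpa using hx : x ∈ Gᶜ)]
  -- squeeze
  refine tendsto_of_le_liminf_of_limsup_le ?_ ?_ ?_ ?_
  · exact le_of_tendsto hφlim (Filter.Eventually.of_forall hlb)
  · exact ge_of_tendsto hψlim (Filter.Eventually.of_forall hub)
  · refine ⟨‖f‖, Filter.eventually_map.2 (Filter.Eventually.of_forall fun t => ?_)⟩
    haveI := hprob t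
    calc ∫ x, G.indicator (⇑f) x ∂(μ t) ≤ ∫ x, f x ∂(μ t) :=
          integral_mono (hint (μ t)) (f.integrable _) (Set.indicator_le_self' (fun y _ => hf y))
      _ ≤ ‖f‖ := by
          have := norm_integral_le_of_norm_le_const (C := ‖f‖) (μ := μ t) (f := ⇑f)
            (Filter.Eventually.of_forall fun x => f.norm_coe_le_norm x)
          simp only [probReal_univ, mul_one] at this
          exact le_trans (le_abs_self _) this
  · refine ⟨0, Filter.eventually_map.2 (Filter.Eventually.of_forall fun t => ?_)⟩
    haveI := hprob t
    exact integral_nonneg fun x => Set.indicator_nonneg (fun y _ => hf y) x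

lemma tendstoWeakly_integral_indicator'
    {μ : ℝ → Measure E} {ν : Measure E} [IsFiniteMeasure ν]
    (hprob : ∀ t, IsProbabilityMeasure (μ t))
    (hconv : TendstoWeakly μ ν) {G : Set E} (hGopen : IsOpen G)
    (hfront : ν (closure G \ G) = 0) (f : BoundedContinuousFunction E ℝ) :
    Tendsto (fun t => ∫ x, G.indicator (⇑f) x ∂(μ t)) atTop
      (𝓝 (∫ x, G.indicator (⇑f) x ∂ν)) := by
  have hGm := hGopen.measurableSet
  set c : BoundedContinuousFunction E ℝ := BoundedContinuousFunction.const E ‖f‖ with hc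
  have hfc : ∀ x, 0 ≤ (f + c) x := by
    intro x
    have := f.norm_coe_le_norm x
    simp only [BoundedContinuousFunction.coe_add, Pi.add_apply, hc,
      BoundedContinuousFunction.const_apply]
    have := abs_le.1 (by simpa [Real.norm_eq_abs] using this)
    linarith [this.1]
  have hcpos : ∀ x, 0 ≤ c x := fun x => by
    simp [hc, BoundedContinuousFunction.const_apply, norm_nonneg]
  have key := tendstoWeakly_integral_indicator hprob hconv hGopen hfront (f + c) hfc
  have keyc := tendstoWeakly_integral_indicator hprob hconv hGopen hfront c hcpos
  have hsplit : ∀ (m : Measure E) [IsFiniteMeasure m],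
      ∫ x, G.indicator (⇑f) x ∂m
        = ∫ x, G.indicator (⇑(f + c)) x ∂m - ∫ x, G.indicator (⇑c) x ∂m := by
    intro m _
    rw [← integral_sub (((f + c).integrable m).indicator hGm) ((c.integrable m).indicator hGm)]
    apply integral_congr_ae
    refine Filter.Eventually.of_forall fun x => ?_
    by_cases hx : x ∈ G <;>
      simp [Set.indicator_of_mem, Set.indicator_of_notMem, hx]
  have := key.sub keyc
  have heq : ∀ t, ∫ x, G.indicator (⇑(f + c)) x ∂(μ t) - ∫ x, G.indicator (⇑c) x ∂(μ t)
      = ∫ x, G.indicator (⇑f) x ∂(μ t) := by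
    intro t
    haveI := hprob t
    exact (hsplit (μ t)).symm
  rw [← hsplit ν] at this
  exact this.congr heq

lemma tendstoWeakly_measure_toReal
    {μ : ℝ → Measure E} {ν : Measure E} [IsFiniteMeasure ν]
    (hprob : ∀ t, IsProbabilityMeasure (μ t))
    (hconv : TendstoWeakly μ ν) {G : Set E} (hGopen : IsOpen G)
    (hfront : ν (closure G \ G) = 0) :
    Tendsto (fun t => ((μ t) G).toReal) atTop (𝓝 ((ν G).toReal)) := by
  have key := tendstoWeakly_integral_indicator' hprob hconv hGopen hfront
    (BoundedContinuousFunction.const E (1:ℝ))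
  have hint : ∀ (m : Measure E), ∫ x, G.indicator
      (⇑(BoundedContinuousFunction.const E (1:ℝ))) x ∂m = (m G).toReal := by
    intro m
    rw [show ⇑(BoundedContinuousFunction.const E (1:ℝ)) = fun _ : E => (1:ℝ) from rfl,
      integral_indicator_const (1:ℝ) hGopen.measurableSet]
    simp [Measure.real]
  simp only [hint] at key
  exact key

lemma tendstoWeakly_cond
    {μ : ℝ → Measure E} {ν : Measure E} [IsFiniteMeasure ν]
    (hprob : ∀ t, IsProbabilityMeasure (μ t))
    (hconv : TendstoWeakly μ ν) {G : Set E} (hGopen : IsOpen G)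
    (hfront : ν (closure G \ G) = 0) (hGpos : ν G ≠ 0) :
    TendstoWeakly (fun t => (μ t)[|G]) (ν[|G]) := by
  intro f
  have hGm := hGopen.measurableSet
  have hform : ∀ (m : Measure E),
      ∫ x, f x ∂(m[|G]) = (m G).toReal⁻¹ * ∫ x, G.indicator (⇑f) x ∂m := by
    intro m
    rw [ProbabilityTheory.cond, integral_smul_measure, integral_indicator hGm]
    rw [ENNReal.toReal_inv]
    rfl
  have ht1 := tendstoWeakly_integral_indicator' hprob hconv hGopen hfront f
  have ht2 := tendstoWeakly_measure_toReal hprob hconv hGopen hfront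
  have hne : (ν G).toReal ≠ 0 := by
    simp [ENNReal.toReal_ne_zero, hGpos, measure_ne_top ν G]
  have := (ht2.inv₀ hne).mul ht1
  simp only [← hform] at this
  exact this

lemma null_of_tendstoWeakly
    {μ : ℝ → Measure E} {ν : Measure E} [IsFiniteMeasure ν]
    (hprob : ∀ t, IsProbabilityMeasure (μ t))
    (hconv : TendstoWeakly μ ν) {G : Set E} (hGopen : IsOpen G) (hGu : G ≠ univ)
    (h0 : ∀ᶠ t in atTop, μ t G = 0) : ν G = 0 := by
  rcases eq_empty_or_nonempty G with hGe | hGne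
  · simp [hGe]
  have hGcne : Gᶜ.Nonempty := Set.nonempty_compl.2 hGu
  have hGm := hGopen.measurableSet
  -- each approximant has zero integral in the limit
  have hφν : ∀ n : ℕ, ∫ x, ((1:BoundedContinuousFunction E ℝ) - psiF Gᶜ n) x ∂ν = 0 := by
    intro n
    have hzero : ∀ᶠ t in atTop, ∫ x, ((1:BoundedContinuousFunction E ℝ) - psiF Gᶜ n) x ∂(μ t) = 0 := by
      filter_upwards [h0] with t ht
      haveI := hprob t
      apply integral_eq_zero_of_ae
      have : ∀ᵐ x ∂(μ t), x ∉ G := by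
        rw [ae_iff]
        simpa using ht
      filter_upwards [this] with x hx
      have h1 : (1:ℝ) ≤ psiF Gᶜ n x := by
        have := indicator_le_psiF Gᶜ n x
        rwa [Set.indicator_of_mem (Set.mem_compl hx)] at this
      have h2 := psiF_le_one Gᶜ n x
      simp only [BoundedContinuousFunction.coe_sub, BoundedContinuousFunction.coe_one,
        Pi.sub_apply, Pi.one_apply, Pi.zero_apply]
      linarith
    have := hconv ((1:BoundedContinuousFunction E ℝ) - psiF Gᶜ n)
    have h2 : Tendsto (fun t => ∫ x, ((1:BoundedContinuousFunction E ℝ) - psiF Gᶜ n) x ∂(μ t))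
        atTop (𝓝 0) :=
      Tendsto.congr' (by filter_upwards [hzero] with t ht using ht.symm) tendsto_const_nhds
    exact tendsto_nhds_unique this h2
  -- monotone convergence to the indicator
  have hφlim : Tendsto (fun n : ℕ => ∫ x, ((1:BoundedContinuousFunction E ℝ) - psiF Gᶜ n) x ∂ν)
      atTop (𝓝 (∫ x, G.indicator (fun _ => (1:ℝ)) x ∂ν)) := by
    apply integral_tendsto_of_tendsto_of_monotone
      (fun n => ((1:BoundedContinuousFunction E ℝ) - psiF Gᶜ n).integrable ν)
      ((integrable_const (1:ℝ)).indicator hGm)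
    · refine Filter.Eventually.of_forall fun x m n hmn => ?_
      simp only [BoundedContinuousFunction.coe_sub, BoundedContinuousFunction.coe_one,
        Pi.sub_apply, Pi.one_apply]
      have := psiF_antitone Gᶜ x hmn
      linarith
    · refine Filter.Eventually.of_forall fun x => ?_
      simp only [BoundedContinuousFunction.coe_sub, BoundedContinuousFunction.coe_one,
        Pi.sub_apply, Pi.one_apply]
      have h0' : Tendsto (fun n => 1 - psiF Gᶜ n x) atTop
          (𝓝 (1 - Gᶜ.indicator (fun _ => (1:ℝ)) x)) :=
        tendsto_const_nhds.sub (psiF_tendsto Gᶜ hGopen.isClosed_compl hGcne x)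
      convert h0' using 2
      by_cases hx : x ∈ G
      · simp [Set.indicator_of_mem hx, Set.indicator_of_notMem (by simpa using hx : x ∉ Gᶜ)]
      · simp [Set.indicator_of_notMem hx, Set.indicator_of_mem (by simpa using hx : x ∈ Gᶜ)]
  simp only [hφν] at hφlim
  have : ∫ x, G.indicator (fun _ => (1:ℝ)) x ∂ν = 0 := (tendsto_nhds_unique hφlim tendsto_const_nhds)
  rw [integral_indicator_const (1:ℝ) hGm] at this
  simp only [smul_eq_mul, mul_one] at this
  exact (ENNReal.toReal_eq_zero_iff _).1 this |>.resolve_right (measure_ne_top ν G)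

lemma ext_of_bcf_integral_eq {μ ν : Measure E} [IsFiniteMeasure μ] [IsFiniteMeasure ν]
    (h : ∀ f : BoundedContinuousFunction E ℝ, ∫ x, f x ∂μ = ∫ x, f x ∂ν) : μ = ν := by
  apply ext_of_forall_lintegral_eq_of_IsFiniteMeasure
  intro f
  obtain ⟨C, hC⟩ := f.bounded
  set g : BoundedContinuousFunction E ℝ :=
    BoundedContinuousFunction.mkOfBound
      ⟨fun x => (f x : ℝ), NNReal.continuous_coe.comp f.continuous⟩ C
      (fun x y => by
        have := hC x y
        rw [NNReal.dist_eq] at this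
        simpa [Real.dist_eq] using this) with hg
  have hgx : ∀ x, g x = (f x : ℝ) := fun x => rfl
  have key : ∀ (m : Measure E) [IsFiniteMeasure m],
      ∫⁻ x, (f x : ℝ≥0∞) ∂m = ENNReal.ofReal (∫ x, g x ∂m) := by
    intro m _
    rw [ofReal_integral_eq_lintegral_ofReal (g.integrable m)
      (Filter.Eventually.of_forall fun x => by simp [hgx])]
    congr 1
    ext x
    simp [hgx]
  rw [key μ, key ν, h g]

lemma map_cond_eq {Ω : Type*} [MeasurableSpace Ω] (μ : Measure Ω)
    {g : Ω → E} (hg : Measurable g) {A : Set E} (hA : MeasurableSet A) :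
    Measure.map g (μ[|g ⁻¹' A]) = (Measure.map g μ)[|A] := by
  ext B hB
  rw [Measure.map_apply hg hB, cond_apply (hg hA), cond_apply hA,
    Measure.map_apply hg hA, Measure.map_apply hg (hA.inter hB), Set.preimage_inter]

end Helpers

section NormFun

variable {F : Type*} [AddCommGroup F] [Module ℝ F] {N : F → ℝ}

lemma IsNormFun.zero (hN : IsNormFun N) : N 0 = 0 := by
  have := hN.2.1 0 0
  simpa using this

lemma IsNormFun.nonneg (hN : IsNormFun N) (x : F) : 0 ≤ N x := by
  rcases eq_or_ne x 0 with h | h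
  · simp [h, hN.zero]
  · exact (hN.2.2 x h).le

lemma IsNormFun.neg (hN : IsNormFun N) (x : F) : N (-x) = N x := by
  have := hN.2.1 (-1) x
  simpa using this

lemma IsNormFun.abs_sub_le (hN : IsNormFun N) (x y : F) : |N x - N y| ≤ N (x - y) := by
  have h1 := hN.1 (x - y) y
  have h2 := hN.1 (y - x) x
  rw [sub_add_cancel] at h1
  rw [sub_add_cancel] at h2
  have hneg : N (y - x) = N (x - y) := by rw [← hN.neg (x - y), neg_sub]
  rw [abs_sub_le_iff]
  constructor <;> linarith

lemma IsNormFun.sum_le (hN : IsNormFun N) {ι : Type*} (s : Finset ι) (f : ι → F) :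
    N (∑ i ∈ s, f i) ≤ ∑ i ∈ s, N (f i) := by
  classical
  induction s using Finset.induction with
  | empty => simp [hN.zero]
  | insert a s' hx ih =>
    rw [Finset.sum_insert hx, Finset.sum_insert hx]
    exact le_trans (hN.1 _ _) (by linarith)

lemma IsNormFun.smul_pos (hN : IsNormFun N) {r : ℝ} (hr : 0 ≤ r) (x : F) :
    N (r • x) = r * N x := by
  rw [hN.2.1, abs_of_nonneg hr]

end NormFun

section NormCont

variable {d : ℕ}

lemma normFun_pi_le {Nd : (Fin d → ℝ) → ℝ} (hNd : IsNormFun Nd) (x : Fin d → ℝ) :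
    Nd x ≤ ∑ i, |x i| * Nd (Pi.single i 1) := by
  have hx : x = ∑ i, (x i) • (Pi.single i (1:ℝ) : Fin d → ℝ) := by
    funext j
    rw [Finset.sum_apply]
    have hterm : ∀ i, (x i • (Pi.single i (1:ℝ) : Fin d → ℝ)) j
        = if j = i then x i else 0 := by
      intro i
      rw [Pi.smul_apply, Pi.single_apply]
      simp [mul_ite]
    simp only [hterm]
    simp
  calc Nd x = Nd (∑ i, (x i) • (Pi.single i (1:ℝ) : Fin d → ℝ)) := by rw [← hx]
    _ ≤ ∑ i, Nd ((x i) • (Pi.single i (1:ℝ) : Fin d → ℝ)) := hNd.sum_le _ _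
    _ = ∑ i, |x i| * Nd (Pi.single i 1) := by
        apply Finset.sum_congr rfl
        intro i _
        rw [hNd.2.1]

lemma normFun_pi_continuous {Nd : (Fin d → ℝ) → ℝ} (hNd : IsNormFun Nd) :
    Continuous Nd := by
  rw [continuous_iff_continuousAt]
  intro y
  have hg : Continuous fun x : Fin d → ℝ => ∑ i, |x i - y i| * Nd (Pi.single i 1) :=
    continuous_finset_sum _ fun i _ =>
      (((continuous_apply i).sub continuous_const).abs).mul continuous_const
  have hbound : ∀ x, |Nd x - Nd y| ≤ ∑ i, |x i - y i| * Nd (Pi.single i 1) := by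
    intro x
    refine le_trans (hNd.abs_sub_le x y) ?_
    have := normFun_pi_le hNd (x - y)
    simpa using this
  have hglim : Tendsto (fun x : Fin d → ℝ => ∑ i, |x i - y i| * Nd (Pi.single i 1)) (𝓝 y)
      (𝓝 0) := by
    have := hg.tendsto y
    simpa using this
  have hlow : Tendsto (fun x => Nd y - ∑ i, |x i - y i| * Nd (Pi.single i 1)) (𝓝 y) (𝓝 (Nd y)) := by
    simpa using tendsto_const_nhds.sub hglim
  have hhigh : Tendsto (fun x => Nd y + ∑ i, |x i - y i| * Nd (Pi.single i 1)) (𝓝 y) (𝓝 (Nd y)) := by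
    simpa using tendsto_const_nhds.add hglim
  refine tendsto_of_tendsto_of_tendsto_of_le_of_le hlow hhigh ?_ ?_
  · intro x
    dsimp only
    linarith [(abs_sub_le_iff.1 (hbound x)).2]
  · intro x
    dsimp only
    linarith [(abs_sub_le_iff.1 (hbound x)).1]

lemma normFun_prod_le {Nd : (Fin d → ℝ) → ℝ} {N1 : ((Fin d → ℝ) × ℝ) → ℝ}
    (hN1 : IsNormFun N1) (hbasis1 : N1 (0, 1) = 1)
    (hcompat : ∀ x, N1 (x, 0) = Nd x) (p : (Fin d → ℝ) × ℝ) :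
    N1 p ≤ Nd p.1 + |p.2| := by
  have hsplit : p = (p.1, (0:ℝ)) + ((0 : Fin d → ℝ), p.2) := by simp
  have hz : N1 ((0 : Fin d → ℝ), p.2) = |p.2| := by
    have : ((0 : Fin d → ℝ), p.2) = p.2 • ((0 : Fin d → ℝ), (1:ℝ)) := by simp
    rw [this, hN1.2.1, hbasis1, mul_one]
  calc N1 p = N1 ((p.1, (0:ℝ)) + ((0 : Fin d → ℝ), p.2)) := by rw [← hsplit]
    _ ≤ N1 (p.1, (0:ℝ)) + N1 ((0 : Fin d → ℝ), p.2) := hN1.1 _ _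
    _ = Nd p.1 + |p.2| := by rw [hcompat, hz]

lemma normFun_prod_continuous {Nd : (Fin d → ℝ) → ℝ} {N1 : ((Fin d → ℝ) × ℝ) → ℝ}
    (hNd : IsNormFun Nd) (hN1 : IsNormFun N1) (hbasis1 : N1 (0, 1) = 1)
    (hcompat : ∀ x, N1 (x, 0) = Nd x) :
    Continuous N1 := by
  rw [continuous_iff_continuousAt]
  intro y
  have hg : Continuous fun p : (Fin d → ℝ) × ℝ => Nd (p.1 - y.1) + |p.2 - y.2| :=
    ((normFun_pi_continuous hNd).comp (continuous_fst.sub continuous_const)).add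
      ((continuous_snd.sub continuous_const).abs)
  have hbound : ∀ p, |N1 p - N1 y| ≤ Nd (p.1 - y.1) + |p.2 - y.2| := by
    intro p
    refine le_trans (hN1.abs_sub_le p y) ?_
    have := normFun_prod_le hN1 hbasis1 hcompat (p - y)
    simpa using this
  have hglim : Tendsto (fun p : (Fin d → ℝ) × ℝ => Nd (p.1 - y.1) + |p.2 - y.2|) (𝓝 y)
      (𝓝 0) := by
    have := hg.tendsto y
    simpa [hNd.zero] using this
  have hlow : Tendsto (fun p => N1 y - (Nd (p.1 - y.1) + |p.2 - y.2|)) (𝓝 y) (𝓝 (N1 y)) := by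
    simpa using tendsto_const_nhds.sub hglim
  have hhigh : Tendsto (fun p => N1 y + (Nd (p.1 - y.1) + |p.2 - y.2|)) (𝓝 y) (𝓝 (N1 y)) := by
    simpa using tendsto_const_nhds.add hglim
  refine tendsto_of_tendsto_of_tendsto_of_le_of_le hlow hhigh ?_ ?_
  · intro p
    dsimp only
    linarith [(abs_sub_le_iff.1 (hbound p)).2]
  · intro p
    dsimp only
    linarith [(abs_sub_le_iff.1 (hbound p)).1]

lemma normFun_pi_lower (hd : 0 < d) {Nd : (Fin d → ℝ) → ℝ} (hNd : IsNormFun Nd) :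
    ∃ m > 0, ∀ x, m * ‖x‖ ≤ Nd x := by
  have hcont := normFun_pi_continuous hNd
  haveI : Nontrivial (Fin d → ℝ) := by
    refine ⟨Pi.single ⟨0, hd⟩ 1, 0, fun h => ?_⟩
    have := congrFun h ⟨0, hd⟩
    simp [Pi.single_eq_same] at this
  have hsne : (Metric.sphere (0 : Fin d → ℝ) 1).Nonempty :=
    NormedSpace.sphere_nonempty.mpr zero_le_one
  obtain ⟨z, hz, hmin⟩ := (isCompact_sphere (0 : Fin d → ℝ) 1).exists_isMinOn hsne
    hcont.continuousOn
  have hznorm : ‖z‖ = 1 := by simpa using hz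
  have hzne : z ≠ 0 := by
    intro h; rw [h] at hznorm; simp at hznorm
  refine ⟨Nd z, hNd.2.2 z hzne, fun x => ?_⟩
  rcases eq_or_ne x 0 with h | h
  · simp [h, hNd.zero]
  · have hxn : ‖x‖ ≠ 0 := norm_ne_zero_iff.mpr h
    have hu : ‖x‖⁻¹ • x ∈ Metric.sphere (0 : Fin d → ℝ) 1 := by
      simp [norm_smul, abs_of_nonneg (inv_nonneg.2 (norm_nonneg x)), inv_mul_cancel₀ hxn]
    have := hmin hu
    have hx : Nd x = ‖x‖ * Nd (‖x‖⁻¹ • x) := by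
      rw [← hNd.smul_pos (norm_nonneg x) (‖x‖⁻¹ • x), smul_smul,
        mul_inv_cancel₀ hxn, one_smul]
    rw [hx]
    have h1 : Nd z ≤ Nd (‖x‖⁻¹ • x) := this
    have h2 : 0 ≤ ‖x‖ := norm_nonneg x
    nlinarith

lemma normFun_cone_lower (hd : 0 < d) {M : ℝ} (hM : 0 < M)
    {Nd : (Fin d → ℝ) → ℝ} {N1 : ((Fin d → ℝ) × ℝ) → ℝ}
    (hNd : IsNormFun Nd) (hN1 : IsNormFun N1)
    (hbasis : ∀ i, Nd (Pi.single i 1) = 1) (hbasis1 : N1 (0, 1) = 1)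
    (hcompat : ∀ x, N1 (x, 0) = Nd x) :
    ∃ c > 0, ∀ x z, |z| ≤ M * Nd x → c * Nd x ≤ N1 (x, z) := by
  obtain ⟨m, hm, hml⟩ := normFun_pi_lower hd hNd
  have hN1cont := normFun_prod_continuous hNd hN1 hbasis1 hcompat
  have hNdcont := normFun_pi_continuous hNd
  set K : Set ((Fin d → ℝ) × ℝ) := {p | Nd p.1 = 1 ∧ |p.2| ≤ M} with hK
  have hKc : IsCompact K := by
    apply Metric.isCompact_of_isClosed_isBounded
    · exact ((isClosed_eq (hNdcont.comp continuous_fst) continuous_const).inter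
        (isClosed_le (continuous_snd.abs) continuous_const))
    · rw [Metric.isBounded_iff_subset_closedBall 0]
      refine ⟨max m⁻¹ M, fun p hp => ?_⟩
      rw [Metric.mem_closedBall, dist_zero_right, Prod.norm_def]
      apply max_le_max
      · have := hml p.1
        rw [hp.1] at this
        calc ‖p.1‖ = m⁻¹ * (m * ‖p.1‖) := by field_simp
          _ ≤ m⁻¹ * 1 := by
              apply mul_le_mul_of_nonneg_left this (inv_nonneg.2 hm.le)
          _ = m⁻¹ := mul_one _
      · simpa [Real.norm_eq_abs] using hp.2
  have hKne : K.Nonempty := by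
    refine ⟨(Pi.single ⟨0, hd⟩ 1, 0), ?_, ?_⟩
    · exact hbasis ⟨0, hd⟩
    · simpa using hM.le
  obtain ⟨q, hq, hqmin⟩ := hKc.exists_isMinOn hKne hN1cont.continuousOn
  have hqne : q ≠ 0 := by
    intro h
    have : Nd q.1 = 1 := hq.1
    rw [h] at this
    simp [hNd.zero] at this
  refine ⟨N1 q, hN1.2.2 q hqne, fun x z hz => ?_⟩
  rcases eq_or_ne x 0 with h | h
  · have : Nd x = 0 := by rw [h, hNd.zero]
    rw [this, mul_zero]
    exact hN1.nonneg _
  · have hr : 0 < Nd x := hNd.2.2 x h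
    have hmem : (Nd x)⁻¹ • (x, z) ∈ K := by
      constructor
      · show Nd ((Nd x)⁻¹ • x) = 1
        rw [hNd.smul_pos (inv_nonneg.2 hr.le)]
        field_simp
      · show |(Nd x)⁻¹ • z| ≤ M
        rw [smul_eq_mul, abs_mul, abs_of_nonneg (inv_nonneg.2 hr.le)]
        calc (Nd x)⁻¹ * |z| ≤ (Nd x)⁻¹ * (M * Nd x) :=
              mul_le_mul_of_nonneg_left hz (inv_nonneg.2 hr.le)
          _ = M := by field_simp
    have hle : N1 q ≤ N1 ((Nd x)⁻¹ • (x, z)) := hqmin hmem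
    have hx : N1 (x, z) = Nd x * N1 ((Nd x)⁻¹ • (x, z)) := by
      rw [← hN1.smul_pos hr.le ((Nd x)⁻¹ • (x, z)), smul_smul,
        mul_inv_cancel₀ hr.ne', one_smul]
    rw [hx]
    nlinarith [hle, hr]

end NormCont

section MoreHelpers

lemma tendstoWeakly_comp {E : Type*} [MeasurableSpace E] [TopologicalSpace E]
    {μ : ℝ → Measure E} {ν : Measure E} (h : TendstoWeakly μ ν)
    {g : ℝ → ℝ} (hg : Tendsto g atTop atTop) : TendstoWeakly (fun t => μ (g t)) ν :=
  fun f => (h f).comp hg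

lemma tendstoWeakly_congr {E : Type*} [MeasurableSpace E] [TopologicalSpace E]
    {μ μ' : ℝ → Measure E} {ν : Measure E} (h : TendstoWeakly μ ν)
    (he : ∀ᶠ t in atTop, μ' t = μ t) : TendstoWeakly μ' ν := by
  intro f
  refine (h f).congr' ?_
  filter_upwards [he] with t ht
  rw [ht]

lemma tendstoWeakly_map_smul {V : Type*} [NormedAddCommGroup V] [NormedSpace ℝ V]
    [MeasurableSpace V] [BorelSpace V]
    {μ : ℝ → Measure V} {ν : Measure V} (h : TendstoWeakly μ ν) (a : ℝ) :
    TendstoWeakly (fun t => Measure.map (a • ·) (μ t)) (Measure.map (a • ·) ν) := by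
  intro f
  have hmeas : Measurable (fun x : V => a • x) := (continuous_const_smul a).measurable
  have key := h (f.compContinuous ⟨(a • ·), continuous_const_smul a⟩)
  have hrw : ∀ m : Measure V, ∫ x, f x ∂(Measure.map (a • ·) m)
      = ∫ x, (f.compContinuous ⟨(a • ·), continuous_const_smul a⟩) x ∂m := by
    intro m
    rw [integral_map hmeas.aemeasurable f.continuous.aestronglyMeasurable]
    rfl
  simp only [hrw] at *
  exact key

lemma cond_congr_ae {Ω : Type*} [MeasurableSpace Ω] (μ : Measure Ω) {S T : Set Ω}
    (h : S =ᵐ[μ] T) : μ[|S] = μ[|T] := by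
  unfold ProbabilityTheory.cond
  rw [measure_congr h, Measure.restrict_congr_set h]

lemma exists_mem_Ioo_not_mem {a b : ℝ} (hab : a < b) {A : Set ℝ} (hA : A.Countable) :
    ∃ s, s ∈ Set.Ioo a b ∧ s ∉ A := by
  by_contra h
  push_neg at h
  have hc : (Set.Ioo a b).Countable := hA.mono h
  rw [← Cardinal.le_aleph0_iff_set_countable, Cardinal.mk_Ioo_real hab] at hc
  exact absurd hc (by simp [Cardinal.aleph0_lt_continuum.not_ge])

end MoreHelpers

set_option maxHeartbeats 2000000 in
/-- **Conditioning on one component** (Lemma, part 2: converse).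
If the conditional law of `t⁻¹(X,Z)` given `‖X‖ > t` converges weakly to `P̃_∞`
supported on `{‖x‖ > 1}`, and `|Z| ≤ M ‖X‖` a.s., then `P̃_∞` is supported on the
truncated cone `{‖x‖ > 1, |z| ≤ M‖x‖}` and the conditional law of `t⁻¹(X,Z)` given
`‖(X,Z)‖ > t` converges weakly to a probability measure `Π_∞` supported on the
truncated cone `{‖(x,z)‖ > 1, |z| ≤ M‖x‖}`. -/
theorem conditioning_on_one_component_converse
    {Ω : Type*} [MeasureSpace Ω] [IsProbabilityMeasure (ℙ : Measure Ω)] {d : ℕ}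
    (X : Ω → (Fin d → ℝ)) (Z : Ω → ℝ)
    (hXmeas : Measurable X) (hZmeas : Measurable Z)
    (hX0 : ℙ {ω | X ω = 0} = 0)
    (Nd : (Fin d → ℝ) → ℝ) (N1 : ((Fin d → ℝ) × ℝ) → ℝ)
    (hNd : IsNormFun Nd) (hN1 : IsNormFun N1)
    (hbasis : ∀ i, Nd (Pi.single i 1) = 1) (hbasis1 : N1 (0, 1) = 1)
    (hcompat : ∀ x, N1 (x, 0) = Nd x)
    (Ptilde : Measure ((Fin d → ℝ) × ℝ)) [IsProbabilityMeasure Ptilde]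
    (hsupp : Ptilde {q | ¬ 1 < Nd q.1} = 0)
    (hconv : TendstoWeakly
      (fun t => Measure.map (fun ω => t⁻¹ • (X ω, Z ω)) (ℙ[|{ω | t < Nd (X ω)}]))
      Ptilde)
    (M : ℝ) (hM : 0 < M)
    (hbound : ∀ᵐ ω ∂ℙ, |Z ω| ≤ M * Nd (X ω)) :
    Ptilde {q | ¬ (1 < Nd q.1 ∧ |q.2| ≤ M * Nd q.1)} = 0 ∧
    ∃ Pinf : Measure ((Fin d → ℝ) × ℝ), IsProbabilityMeasure Pinf ∧
      Pinf {q | ¬ (1 < N1 q ∧ |q.2| ≤ M * Nd q.1)} = 0 ∧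
      TendstoWeakly
        (fun t => Measure.map (fun ω => t⁻¹ • (X ω, Z ω)) (ℙ[|{ω | t < N1 (X ω, Z ω)}]))
        Pinf := by
  classical
  -- dimension must be positive
  have hd : 0 < d := by
    by_contra hd'
    push_neg at hd'
    have hzero : {ω | X ω = 0} = Set.univ :=
      Set.eq_univ_iff_forall.2 fun ω => funext fun i => absurd i.isLt (by omega)
    rw [hzero] at hX0
    simp at hX0
  -- basic continuity and measurability
  have hNdc : Continuous Nd := normFun_pi_continuous hNd
  have hN1c : Continuous N1 := normFun_prod_continuous hNd hN1 hbasis1 hcompat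
  have hYm : Measurable fun ω => (X ω, Z ω) := hXmeas.prodMk hZmeas
  have hφm : ∀ t : ℝ, Measurable fun ω => t⁻¹ • (X ω, Z ω) := fun t =>
    ((continuous_const_smul t⁻¹).measurable).comp hYm
  have hSNm : ∀ t : ℝ, MeasurableSet {ω | t < Nd (X ω)} := fun t =>
    measurableSet_lt measurable_const ((hNdc.measurable).comp hXmeas)
  have hS1m : ∀ t : ℝ, MeasurableSet {ω | t < N1 (X ω, Z ω)} := fun t =>
    measurableSet_lt measurable_const ((hN1c.measurable).comp hYm)
  obtain ⟨c, hc0, hcone⟩ := normFun_cone_lower hd hM hNd hN1 hbasis hbasis1 hcompat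
  -- the conditioning events have positive probability
  set μB : ℝ → Measure ((Fin d → ℝ) × ℝ) :=
    fun t => Measure.map (fun ω => t⁻¹ • (X ω, Z ω)) (ℙ[|{ω | t < Nd (X ω)}]) with hμB
  have hSNpos : ∀ t : ℝ, ℙ {ω | t < Nd (X ω)} ≠ 0 := by
    intro t0 h0
    have hzero : ∀ᶠ t in atTop, ∫ x, (BoundedContinuousFunction.const ((Fin d → ℝ) × ℝ) (1:ℝ)) x
        ∂(μB t) = 0 := by
      filter_upwards [eventually_ge_atTop t0] with t ht
      have hnull : ℙ {ω | t < Nd (X ω)} = 0 :=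
        measure_mono_null (fun ω hω => lt_of_le_of_lt ht hω) h0
      rw [hμB]
      simp [cond_eq_zero_of_meas_eq_zero hnull]
    have h1 := hconv (BoundedContinuousFunction.const ((Fin d → ℝ) × ℝ) (1:ℝ))
    have h2 : Tendsto (fun t => ∫ x, (BoundedContinuousFunction.const ((Fin d → ℝ) × ℝ) (1:ℝ)) x
        ∂(μB t)) atTop (𝓝 0) :=
      Tendsto.congr' (by filter_upwards [hzero] with t ht using ht.symm) tendsto_const_nhds
    have := tendsto_nhds_unique h1 h2
    simp at this
  have hcondP : ∀ t : ℝ, IsProbabilityMeasure (ℙ[|{ω | t < Nd (X ω)}]) := fun t =>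
    cond_isProbabilityMeasure (hSNpos t)
  have hprobB : ∀ t : ℝ, IsProbabilityMeasure (μB t) := by
    intro t
    haveI := hcondP t
    exact Measure.isProbabilityMeasure_map (hφm t).aemeasurable
  have hconvB : TendstoWeakly μB Ptilde := hconv
  -- Part 1 : the limit lives in the cone
  set Gb : Set ((Fin d → ℝ) × ℝ) := {q | M * Nd q.1 < |q.2|} with hGbdef
  have hGbopen : IsOpen Gb :=
    isOpen_lt (continuous_const.mul (hNdc.comp continuous_fst)) continuous_snd.abs
  have hGbuniv : Gb ≠ Set.univ := by
    intro h
    have : (0 : (Fin d → ℝ) × ℝ) ∈ Gb := h ▸ Set.mem_univ _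
    simp only [hGbdef, Set.mem_setOf_eq] at this
    rw [show ((0 : (Fin d → ℝ) × ℝ)).1 = 0 from rfl, hNd.zero] at this
    simp at this
  have hbadnull : ℙ {ω | M * Nd (X ω) < |Z ω|} = 0 := by
    have hsub : {ω | M * Nd (X ω) < |Z ω|} ⊆ {ω | ¬ |Z ω| ≤ M * Nd (X ω)} :=
      fun ω hω => not_le.2 hω
    exact measure_mono_null hsub (ae_iff.1 hbound)
  have hGb0 : Ptilde Gb = 0 := by
    apply null_of_tendstoWeakly hprobB hconvB hGbopen hGbuniv
    filter_upwards [eventually_gt_atTop (0:ℝ)] with t ht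
    rw [hμB, Measure.map_apply (hφm t) hGbopen.measurableSet]
    have hpre : (fun ω => t⁻¹ • (X ω, Z ω)) ⁻¹' Gb = {ω | M * Nd (X ω) < |Z ω|} := by
      ext ω
      simp only [Set.mem_preimage, hGbdef, Set.mem_setOf_eq, Prod.smul_fst, Prod.smul_snd,
        smul_eq_mul]
      rw [hNd.smul_pos (inv_nonneg.2 ht.le), abs_mul, abs_of_nonneg (inv_nonneg.2 ht.le),
        mul_left_comm]
      exact mul_lt_mul_iff_right₀ (inv_pos.2 ht)
    rw [hpre, cond_apply (hSNm t)]
    rw [measure_mono_null Set.inter_subset_right hbadnull, mul_zero]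
  have hpart1 : Ptilde {q | ¬ (1 < Nd q.1 ∧ |q.2| ≤ M * Nd q.1)} = 0 := by
    have hsub : {q : (Fin d → ℝ) × ℝ | ¬ (1 < Nd q.1 ∧ |q.2| ≤ M * Nd q.1)}
        ⊆ {q | ¬ 1 < Nd q.1} ∪ Gb := by
      intro q hq
      simp only [Set.mem_setOf_eq, not_and_or] at hq
      rcases hq with h | h
      · exact Or.inl h
      · exact Or.inr (not_le.1 h)
    exact measure_mono_null hsub (measure_union_null hsupp hGb0)
  refine ⟨hpart1, ?_⟩
  -- measurable/open scaffolding on the product space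
  have hGsmeas : ∀ s : ℝ, MeasurableSet {q : (Fin d → ℝ) × ℝ | s < Nd q.1} := fun s =>
    measurableSet_lt measurable_const ((hNdc.comp continuous_fst).measurable)
  have hGsopen : ∀ s : ℝ, IsOpen {q : (Fin d → ℝ) × ℝ | s < Nd q.1} := fun s =>
    isOpen_lt continuous_const (hNdc.comp continuous_fst)
  have hsmulm : ∀ a : ℝ, Measurable fun q : (Fin d → ℝ) × ℝ => a • q := fun a =>
    (continuous_const_smul a).measurable
  -- the scaling identity for the limit measure
  have hscale : ∀ s : ℝ, 1 < s → Ptilde {q | Nd q.1 = s} = 0 →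
      Ptilde {q | s < Nd q.1} ≠ 0 →
      Measure.map (s • ·) Ptilde = Ptilde[|{q | s < Nd q.1}] := by
    intro s hs hatom hposs
    have hs0 : (0:ℝ) < s := lt_trans zero_lt_one hs
    have hfront : Ptilde (closure {q : (Fin d → ℝ) × ℝ | s < Nd q.1} \ {q | s < Nd q.1}) = 0 := by
      apply measure_mono_null _ hatom
      intro q hq
      have hcl : closure {q : (Fin d → ℝ) × ℝ | s < Nd q.1} ⊆ {q | s ≤ Nd q.1} :=
        closure_minimal (Set.setOf_subset_setOf.2 fun p => le_of_lt)
          (isClosed_le continuous_const (hNdc.comp continuous_fst))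
      exact le_antisymm (not_lt.1 hq.2) (hcl hq.1)
    have h1 := tendstoWeakly_cond hprobB hconvB (hGsopen s) hfront hposs
    have h2 : TendstoWeakly (fun t => Measure.map (s • ·) (μB (s * t)))
        (Measure.map (s • ·) Ptilde) :=
      tendstoWeakly_map_smul (tendstoWeakly_comp hconvB
        (Tendsto.const_mul_atTop hs0 tendsto_id)) s
    have heq : ∀ᶠ t in atTop,
        (μB t)[|{q | s < Nd q.1}] = Measure.map (s • ·) (μB (s * t)) := by
      filter_upwards [eventually_gt_atTop (0:ℝ)] with t ht
      have hpre : (fun ω => t⁻¹ • (X ω, Z ω)) ⁻¹' {q | s < Nd q.1}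
          = {ω | s * t < Nd (X ω)} := by
        ext ω
        simp only [Set.mem_preimage, Set.mem_setOf_eq, Prod.smul_fst]
        rw [hNd.smul_pos (inv_nonneg.2 ht.le), inv_mul_eq_div, lt_div_iff₀ ht]
      have hss : {ω | s * t < Nd (X ω)} ⊆ {ω | t < Nd (X ω)} := by
        intro ω hω
        have ht' : t < s * t := by nlinarith
        exact lt_trans ht' hω
      calc (μB t)[|{q | s < Nd q.1}]
          = Measure.map (fun ω => t⁻¹ • (X ω, Z ω))
              ((ℙ[|{ω | t < Nd (X ω)}])[|(fun ω => t⁻¹ • (X ω, Z ω)) ⁻¹' {q | s < Nd q.1}]) := by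
            rw [map_cond_eq _ (hφm t) (hGsmeas s)]
        _ = Measure.map (fun ω => t⁻¹ • (X ω, Z ω)) (ℙ[|{ω | s * t < Nd (X ω)}]) := by
            have hinter2 : {ω | t < Nd (X ω)} ∩ {ω | s * t < Nd (X ω)}
                = {ω | s * t < Nd (X ω)} := Set.inter_eq_right.2 hss
            rw [hpre, cond_cond_eq_cond_inter (hSNm t) (hSNm (s * t)), hinter2]
        _ = Measure.map (s • ·) (μB (s * t)) := by
            rw [hμB]
            rw [Measure.map_map (hsmulm s) (hφm (s * t))]
            congr 1
            funext ω
            show t⁻¹ • (X ω, Z ω) = s • ((s * t)⁻¹ • (X ω, Z ω))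
            rw [smul_smul, mul_inv, ← mul_assoc, mul_inv_cancel₀ (ne_of_gt hs0), one_mul]
    haveI : IsProbabilityMeasure (Ptilde[|{q | s < Nd q.1}]) :=
      cond_isProbabilityMeasure hposs
    have huniq : ∀ f : BoundedContinuousFunction ((Fin d → ℝ) × ℝ) ℝ,
        ∫ x, f x ∂(Ptilde[|{q | s < Nd q.1}]) = ∫ x, f x ∂(Measure.map (s • ·) Ptilde) := by
      intro f
      refine tendsto_nhds_unique (h1 f) (Tendsto.congr' ?_ (h2 f))
      filter_upwards [heq] with t ht
      rw [ht]
    exact (ext_of_bcf_integral_eq huniq).symm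
  -- the tail of Nd under Ptilde never vanishes
  have htail1 : Ptilde {q : (Fin d → ℝ) × ℝ | 1 < Nd q.1} = 1 := by
    have hcompl : {q : (Fin d → ℝ) × ℝ | ¬ 1 < Nd q.1} = {q | 1 < Nd q.1}ᶜ := rfl
    rw [hcompl] at hsupp
    exact (prob_compl_eq_zero_iff (hGsmeas 1)).1 hsupp
  have hex : ∃ s₀ : ℝ, 1 < s₀ ∧ Ptilde {q | s₀ < Nd q.1} ≠ 0 := by
    by_contra hcontra
    push_neg at hcontra
    have hunion : {q : (Fin d → ℝ) × ℝ | 1 < Nd q.1}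
        ⊆ ⋃ n : ℕ, {q : (Fin d → ℝ) × ℝ | 1 + 1/(n+1) < Nd q.1} := by
      intro q hq
      have hq' : (0:ℝ) < Nd q.1 - 1 := sub_pos.2 hq
      obtain ⟨n, hn⟩ := exists_nat_one_div_lt hq'
      exact Set.mem_iUnion.2 ⟨n, by simp only [Set.mem_setOf_eq]; linarith⟩
    have hnull : Ptilde (⋃ n : ℕ, {q : (Fin d → ℝ) × ℝ | 1 + 1/(n+1) < Nd q.1}) = 0 :=
      measure_iUnion_null fun n => hcontra _
        (by
          have h1 : (0:ℝ) < 1/(n+1) := by positivity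
          linarith)
    have := measure_mono_null hunion hnull
    rw [htail1] at this
    simp at this
  have hatomsNd : {s : ℝ | Ptilde {q : (Fin d → ℝ) × ℝ | Nd q.1 = s} ≠ 0}.Countable := by
    have hcnt := Measure.countable_meas_pos_of_disjoint_iUnion (μ := Ptilde)
      (As := fun s : ℝ => {q : (Fin d → ℝ) × ℝ | Nd q.1 = s})
      (fun s => measurableSet_eq_fun ((hNdc.comp continuous_fst).measurable) measurable_const)
      (fun s s' hss' => Set.disjoint_left.2 fun q hq hq' => hss' (hq ▸ hq'.symm ▸ rfl))
    refine hcnt.mono fun s hs => ?_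
    simpa [pos_iff_ne_zero] using hs
  obtain ⟨s₀, hs₀1, hs₀pos⟩ := hex
  obtain ⟨s₁, hs₁mem, hs₁atom⟩ := exists_mem_Ioo_not_mem hs₀1 hatomsNd
  have hs₁1 : 1 < s₁ := hs₁mem.1
  have hs₁0 : (0:ℝ) < s₁ := lt_trans zero_lt_one hs₁1
  have hs₁pos : Ptilde {q | s₁ < Nd q.1} ≠ 0 := by
    intro h0
    exact hs₀pos (measure_mono_null (fun q hq => lt_trans hs₁mem.2 hq) h0)
  have hid := hscale s₁ hs₁1 (by simpa using hs₁atom) hs₁pos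
  have hID : ∀ r : ℝ, s₁ ≤ r →
      Ptilde {q | r < Nd q.1}
        = Ptilde {q | s₁ < Nd q.1} * Ptilde {q | r / s₁ < Nd q.1} := by
    intro r hr
    have hLHS : Measure.map (s₁ • ·) Ptilde {q | r < Nd q.1}
        = Ptilde {q | r / s₁ < Nd q.1} := by
      rw [Measure.map_apply (hsmulm s₁) (hGsmeas r)]
      congr 1
      ext q
      simp only [Set.mem_preimage, Set.mem_setOf_eq, Prod.smul_fst]
      rw [hNd.smul_pos hs₁0.le]
      exact (div_lt_iff₀' hs₁0).symm
    have hinter : {q : (Fin d → ℝ) × ℝ | s₁ < Nd q.1} ∩ {q | r < Nd q.1}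
        = {q | r < Nd q.1} :=
      Set.inter_eq_right.2 (Set.setOf_subset_setOf.2 fun q hq => lt_of_le_of_lt hr hq)
    rw [hid, cond_apply (hGsmeas s₁), hinter] at hLHS
    rw [← hLHS, ← mul_assoc, ENNReal.mul_inv_cancel hs₁pos (measure_ne_top _ _), one_mul]
  have hpow : ∀ n : ℕ, Ptilde {q | s₁ ^ n < Nd q.1} ≠ 0 := by
    intro n
    induction n with
    | zero =>
      rw [pow_zero]
      rw [htail1]
      exact one_ne_zero
    | succ n ih =>
      have hr : s₁ ≤ s₁ ^ (n+1) := le_self_pow₀ (le_of_lt hs₁1) (Nat.succ_ne_zero n)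
      rw [hID _ hr]
      have hdiv : s₁ ^ (n+1) / s₁ = s₁ ^ n := by
        rw [pow_succ]
        field_simp
      rw [hdiv]
      exact mul_ne_zero hs₁pos ih
  have hpos : ∀ r : ℝ, Ptilde {q | r < Nd q.1} ≠ 0 := by
    intro r h0
    obtain ⟨n, hn⟩ := pow_unbounded_of_one_lt r hs₁1
    exact hpow n (measure_mono_null (fun q hq => lt_trans hn hq) h0)
  -- choose the rescaling constant C'
  have hatomsN1 : {s : ℝ | Ptilde {q : (Fin d → ℝ) × ℝ | N1 q = s} ≠ 0}.Countable := by
    have hcnt := Measure.countable_meas_pos_of_disjoint_iUnion (μ := Ptilde)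
      (As := fun s : ℝ => {q : (Fin d → ℝ) × ℝ | N1 q = s})
      (fun s => measurableSet_eq_fun hN1c.measurable measurable_const)
      (fun s s' hss' => Set.disjoint_left.2 fun q hq hq' => hss' (hq ▸ hq'.symm ▸ rfl))
    refine hcnt.mono fun s hs => ?_
    simpa [pos_iff_ne_zero] using hs
  obtain ⟨C', hC'mem, hC'atom⟩ :=
    exists_mem_Ioo_not_mem (show (1+M : ℝ) < (2+M) by linarith) hatomsN1
  have hC'M : 1 + M < C' := hC'mem.1
  have hC'pos : (0:ℝ) < C' := by linarith
  have hC'atomeq : Ptilde {q : (Fin d → ℝ) × ℝ | N1 q = C'} = 0 := by simpa using hC'atom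
  -- the rescaled family and its limit
  set μ' : ℝ → Measure ((Fin d → ℝ) × ℝ) :=
    fun t => Measure.map (fun ω => t⁻¹ • (X ω, Z ω)) (ℙ[|{ω | t / C' < Nd (X ω)}]) with hμ'
  have hμ'eq : ∀ t : ℝ, μ' t = Measure.map (C'⁻¹ • ·) (μB (t / C')) := by
    intro t
    rw [hμ', hμB]
    simp only
    rw [Measure.map_map (hsmulm C'⁻¹) (hφm (t / C'))]
    congr 1
    funext ω
    show t⁻¹ • (X ω, Z ω) = C'⁻¹ • ((t / C')⁻¹ • (X ω, Z ω))
    rw [smul_smul, div_eq_mul_inv, mul_inv, inv_inv, mul_comm t⁻¹ C', ← mul_assoc,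
      inv_mul_cancel₀ (ne_of_gt hC'pos), one_mul]
  have hμ'conv : TendstoWeakly μ' (Measure.map (C'⁻¹ • ·) Ptilde) :=
    tendstoWeakly_congr
      (tendstoWeakly_map_smul (tendstoWeakly_comp hconvB
        (Tendsto.atTop_div_const hC'pos tendsto_id)) C'⁻¹)
      (Filter.Eventually.of_forall hμ'eq)
  set Q : Measure ((Fin d → ℝ) × ℝ) := Measure.map (C'⁻¹ • ·) Ptilde with hQ
  haveI hQprob : IsProbabilityMeasure Q := Measure.isProbabilityMeasure_map (hsmulm C'⁻¹).aemeasurable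
  have hμ'prob : ∀ t : ℝ, IsProbabilityMeasure (μ' t) := by
    intro t
    haveI := cond_isProbabilityMeasure (μ := ℙ) (hSNpos (t / C'))
    rw [hμ']
    exact Measure.isProbabilityMeasure_map (hφm t).aemeasurable
  have hAopen : IsOpen {q : (Fin d → ℝ) × ℝ | 1 < N1 q} := isOpen_lt continuous_const hN1c
  have hAmeas := hAopen.measurableSet
  have hQpre : ∀ S : Set ((Fin d → ℝ) × ℝ), MeasurableSet S →
      Q S = Ptilde ((fun q => C'⁻¹ • q) ⁻¹' S) := fun S hS =>
    Measure.map_apply (hsmulm C'⁻¹) hS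
  have hQfront : Q (closure {q : (Fin d → ℝ) × ℝ | 1 < N1 q} \ {q | 1 < N1 q}) = 0 := by
    have hsub : closure {q : (Fin d → ℝ) × ℝ | 1 < N1 q} \ {q | 1 < N1 q}
        ⊆ {q | N1 q = 1} := by
      intro q hq
      have hcl : closure {q : (Fin d → ℝ) × ℝ | 1 < N1 q} ⊆ {q | 1 ≤ N1 q} :=
        closure_minimal (Set.setOf_subset_setOf.2 fun p => le_of_lt)
          (isClosed_le continuous_const hN1c)
      exact le_antisymm (not_lt.1 hq.2) (hcl hq.1)
    apply measure_mono_null hsub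
    have hm1 : MeasurableSet {q : (Fin d → ℝ) × ℝ | N1 q = 1} :=
      measurableSet_eq_fun hN1c.measurable measurable_const
    rw [hQpre _ hm1]
    have hset : (fun q : (Fin d → ℝ) × ℝ => C'⁻¹ • q) ⁻¹' {q | N1 q = 1}
        = {q | N1 q = C'} := by
      ext q
      simp only [Set.mem_preimage, Set.mem_setOf_eq]
      rw [hN1.smul_pos (inv_nonneg.2 hC'pos.le), inv_mul_eq_div,
        div_eq_one_iff_eq (ne_of_gt hC'pos)]
    rw [hset, hC'atomeq]
  have hQA : Q {q : (Fin d → ℝ) × ℝ | 1 < N1 q} ≠ 0 := by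
    rw [hQpre _ hAmeas]
    have hset : (fun q : (Fin d → ℝ) × ℝ => C'⁻¹ • q) ⁻¹' {q | 1 < N1 q}
        = {q | C' < N1 q} := by
      ext q
      simp only [Set.mem_preimage, Set.mem_setOf_eq]
      rw [hN1.smul_pos (inv_nonneg.2 hC'pos.le), inv_mul_eq_div, lt_div_iff₀ hC'pos, one_mul]
    rw [hset]
    intro h0
    apply hpos (C' / c)
    have hsub : {q : (Fin d → ℝ) × ℝ | C' / c < Nd q.1} ⊆ {q | C' < N1 q} ∪ Gb := by
      intro q hq
      by_cases hcq : |q.2| ≤ M * Nd q.1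
      · left
        have h1 : c * Nd q.1 ≤ N1 q := by
          have := hcone q.1 q.2 hcq
          simpa using this
        have h2 : C' < c * Nd q.1 := (div_lt_iff₀' hc0).1 hq
        exact lt_of_lt_of_le h2 h1
      · exact Or.inr (not_le.1 hcq)
    have hle : Ptilde {q | C' / c < Nd q.1} ≤ Ptilde ({q | C' < N1 q} ∪ Gb) :=
      measure_mono hsub
    rw [measure_union_null h0 hGb0] at hle
    exact le_antisymm hle zero_le
  have hcondconv : TendstoWeakly (fun t => (μ' t)[|{q | 1 < N1 q}])
      (Q[|{q | 1 < N1 q}]) :=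
    tendstoWeakly_cond hμ'prob hμ'conv hAopen hQfront hQA
  -- identify the conditioned family with the target family
  have hfinal : ∀ᶠ t in atTop,
      Measure.map (fun ω => t⁻¹ • (X ω, Z ω)) (ℙ[|{ω | t < N1 (X ω, Z ω)}])
        = (μ' t)[|{q | 1 < N1 q}] := by
    filter_upwards [eventually_gt_atTop (0:ℝ)] with t ht
    have hpreA : (fun ω => t⁻¹ • (X ω, Z ω)) ⁻¹' {q | 1 < N1 q}
        = {ω | t < N1 (X ω, Z ω)} := by
      ext ω
      simp only [Set.mem_preimage, Set.mem_setOf_eq]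
      rw [hN1.smul_pos (inv_nonneg.2 ht.le), inv_mul_eq_div, lt_div_iff₀ ht, one_mul]
    have hae : ({ω | t < N1 (X ω, Z ω)} : Set Ω)
        =ᵐ[(ℙ : Measure Ω)]
          ((({ω | t / C' < Nd (X ω)} ∩ {ω | t < N1 (X ω, Z ω)}) : Set Ω)) := by
      rw [Filter.eventuallyEq_set]
      filter_upwards [hbound] with ω hb
      simp only [Set.mem_setOf_eq, Set.mem_inter_iff]
      constructor
      · intro h1
        refine ⟨?_, h1⟩
        have hle : N1 (X ω, Z ω) ≤ (1 + M) * Nd (X ω) := by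
          have h := normFun_prod_le hN1 hbasis1 hcompat (X ω, Z ω)
          simp only at h
          nlinarith [h, hb]
        have h2 : t < (1 + M) * Nd (X ω) := lt_of_lt_of_le h1 hle
        have h3 : t / (1 + M) < Nd (X ω) := by
          rw [div_lt_iff₀ (by linarith : (0:ℝ) < 1 + M)]
          nlinarith
        have h4 : t / C' < t / (1 + M) :=
          div_lt_div_of_pos_left ht (by linarith) hC'M
        linarith
      · exact fun h => h.2
    calc Measure.map (fun ω => t⁻¹ • (X ω, Z ω)) (ℙ[|{ω | t < N1 (X ω, Z ω)}])
        = Measure.map (fun ω => t⁻¹ • (X ω, Z ω))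
            (ℙ[|{ω | t / C' < Nd (X ω)} ∩ {ω | t < N1 (X ω, Z ω)}]) := by
          rw [cond_congr_ae ℙ hae]
      _ = Measure.map (fun ω => t⁻¹ • (X ω, Z ω))
            ((ℙ[|{ω | t / C' < Nd (X ω)}])[|{ω | t < N1 (X ω, Z ω)}]) := by
          rw [cond_cond_eq_cond_inter (hSNm (t / C')) (hS1m t)]
      _ = (μ' t)[|{q | 1 < N1 q}] := by
          rw [hμ']
          simp only
          rw [← hpreA, map_cond_eq _ (hφm t) hAmeas]
  haveI hPinfprob : IsProbabilityMeasure (Q[|{q | 1 < N1 q}]) :=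
    cond_isProbabilityMeasure hQA
  refine ⟨Q[|{q | 1 < N1 q}], hPinfprob, ?_, ?_⟩
  · rw [cond_apply hAmeas]
    have hsub : {q : (Fin d → ℝ) × ℝ | 1 < N1 q}
        ∩ {q | ¬ (1 < N1 q ∧ |q.2| ≤ M * Nd q.1)} ⊆ Gb := by
      intro q hq
      rcases not_and_or.1 hq.2 with h | h
      · exact absurd hq.1 h
      · exact not_le.1 h
    have hQGb : Q Gb = 0 := by
      rw [hQpre _ hGbopen.measurableSet]
      have hset : (fun q : (Fin d → ℝ) × ℝ => C'⁻¹ • q) ⁻¹' Gb = Gb := by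
        ext q
        simp only [Set.mem_preimage, hGbdef, Set.mem_setOf_eq, Prod.smul_fst, Prod.smul_snd,
          smul_eq_mul]
        rw [hNd.smul_pos (inv_nonneg.2 hC'pos.le), abs_mul,
          abs_of_nonneg (inv_nonneg.2 hC'pos.le), mul_left_comm]
        exact mul_lt_mul_iff_right₀ (inv_pos.2 hC'pos)
      rw [hset, hGb0]
    rw [measure_mono_null hsub hQGb, mul_zero]
  · exact tendstoWeakly_congr hcondconv hfinal
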